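/- For the generalized Gaussian family with β even, the Fisher information matrix entry g₂₂ = −E[∂²_σσ log f] equals β/σ². -/

import Mathlib

open MeasureTheory

/-- The generalized Gaussian density. -/
noncomputable def genGaussPdf (β : ℕ) (μ σ x : ℝ) : ℝ :=
  (β : ℝ) / (2 * σ * Real.Gamma (1 / (β : ℝ))) * Real.exp (-(x - μ) ^ β / σ ^ β)

/-- The log-likelihood `l = log f`. -/
noncomputable def genGaussLogLik (β : ℕ) (μ σ x : ℝ) : ℝ :=
  Real.log (genGaussPdf β μ σ x)

section aux

open Real Set

lemma gg_key_int {σ : ℝ} (hσ : 0 < σ) {β : ℕ} (hβ : 0 < β) (q : ℕ) :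
    ∫ x in Set.Ioi (0:ℝ), x ^ q * Real.exp (-x ^ β / σ ^ β)
      = σ ^ (q + 1) * (1 / (β : ℝ)) * Real.Gamma (((q : ℝ) + 1) / β) := by
  have hb : (0:ℝ) < (σ ^ β)⁻¹ := by positivity
  have h := integral_rpow_mul_exp_neg_mul_rpow (p := (β:ℝ)) (q := (q:ℝ)) (b := (σ ^ β)⁻¹)
    (by exact_mod_cast hβ) (by linarith [Nat.cast_nonneg (α := ℝ) q])
  rw [show ∫ x in Set.Ioi (0:ℝ), x ^ q * Real.exp (-x ^ β / σ ^ β)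
      = ∫ x in Set.Ioi (0:ℝ), x ^ (q:ℝ) * Real.exp (-(σ ^ β)⁻¹ * x ^ (β:ℝ)) from
    setIntegral_congr_fun measurableSet_Ioi fun x hx => by
      rw [← Real.rpow_natCast x q, ← Real.rpow_natCast x β]
      ring_nf]
  rw [h hb]
  have h1 : ((σ:ℝ) ^ β)⁻¹ = σ ^ (-(β:ℝ)) := by
    rw [Real.rpow_neg hσ.le, Real.rpow_natCast]
  rw [h1, ← Real.rpow_natCast σ (q+1), ← Real.rpow_mul hσ.le]
  have hβ' : (β:ℝ) ≠ 0 := by positivity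
  rw [show (-(β:ℝ)) * (-((q:ℝ) + 1) / β) = ((q:ℕ) + 1 : ℕ) by push_cast; field_simp]

lemma integrable_comp_abs' {f : ℝ → ℝ} (hf : IntegrableOn f (Set.Ioi 0)) :
    Integrable fun x => f |x| := by
  have h1 : IntegrableOn (fun x => f |x|) (Set.Ioi 0) :=
    hf.congr_fun (fun x hx => by rw [abs_of_pos (by exact hx)]) measurableSet_Ioi
  have h2 : IntegrableOn (fun x => f |x|) (Set.Iic 0) := by
    rw [← Measure.map_neg_eq_self (volume : Measure ℝ)]
    have m : MeasurableEmbedding fun x : ℝ => -x := (Homeomorph.neg ℝ).measurableEmbedding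
    rw [m.integrableOn_map_iff]
    simp_rw [Function.comp_def, abs_neg, neg_preimage, neg_Iic, neg_zero]
    exact Iff.mpr integrableOn_Ici_iff_integrableOn_Ioi h1
  rw [← integrableOn_univ, ← Set.Iic_union_Ioi (a := (0:ℝ))]
  exact h2.union h1

lemma gg_line {σ : ℝ} (hσ : 0 < σ) {β : ℕ} (hβ : 0 < β) (hβe : Even β)
    {q : ℕ} (hq : Even q) (μ : ℝ) :
    Integrable (fun x : ℝ => (x - μ) ^ q * Real.exp (-(x - μ) ^ β / σ ^ β)) ∧
    ∫ x : ℝ, (x - μ) ^ q * Real.exp (-(x - μ) ^ β / σ ^ β)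
      = 2 * (σ ^ (q + 1) * (1 / (β : ℝ)) * Real.Gamma (((q : ℝ) + 1) / β)) := by
  set F : ℝ → ℝ := fun u => u ^ q * Real.exp (-u ^ β / σ ^ β) with hF
  have habs : ∀ u : ℝ, F |u| = F u := fun u => by
    simp only [hF]; rw [hq.pow_abs, hβe.pow_abs]
  have hIoi : IntegrableOn F (Set.Ioi 0) := by
    have := integrableOn_rpow_mul_exp_neg_mul_rpow (p := (β:ℝ)) (s := (q:ℝ))
      (b := (σ ^ β)⁻¹) (by linarith [Nat.cast_nonneg (α := ℝ) q])
      (by exact_mod_cast hβ) (by positivity)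
    refine this.congr_fun (fun x hx => ?_) measurableSet_Ioi
    simp only [hF]
    rw [← Real.rpow_natCast x q, ← Real.rpow_natCast x β]
    ring_nf
  have hFint : Integrable F := by
    have := integrable_comp_abs' hIoi
    refine this.congr (Filter.Eventually.of_forall fun x => (habs x))
  have hint : ∫ x : ℝ, F x = 2 * (σ ^ (q + 1) * (1 / (β : ℝ)) * Real.Gamma (((q : ℝ) + 1) / β)) := by
    rw [show ∫ x : ℝ, F x = ∫ x : ℝ, F |x| from by simp_rw [habs],
      integral_comp_abs (f := F), gg_key_int hσ hβ q]
  constructor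
  · exact hFint.comp_sub_right μ
  · rw [show (fun x : ℝ => (x - μ) ^ q * Real.exp (-(x - μ) ^ β / σ ^ β))
        = fun x => F (x - μ) from rfl, integral_sub_right_eq_self F μ, hint]

lemma gg_deriv1 {β : ℕ} (hβ : 0 < β) (μ x : ℝ) {s : ℝ} (hs : 0 < s) :
    deriv (fun s' => genGaussLogLik β μ s' x) s
      = -s⁻¹ + (β : ℝ) * (x - μ) ^ β * (s ^ (β + 1))⁻¹ := by
  have hΓ : 0 < Real.Gamma (1/(β:ℝ)) := Real.Gamma_pos_of_pos (by positivity)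
  have hβ' : (0:ℝ) < β := by exact_mod_cast hβ
  have hev : (fun s' => genGaussLogLik β μ s' x) =ᶠ[nhds s]
      (fun s' => Real.log ((β:ℝ)/(2*Real.Gamma (1/(β:ℝ)))) - Real.log s'
        - (x - μ) ^ β * (s' ^ β)⁻¹) := by
    filter_upwards [Ioi_mem_nhds hs] with t ht
    have ht' : (0:ℝ) < t := ht
    unfold genGaussLogLik genGaussPdf
    rw [Real.log_mul (by positivity) (Real.exp_ne_zero _), Real.log_exp,
      show (β:ℝ)/(2*t*Real.Gamma (1/(β:ℝ))) = ((β:ℝ)/(2*Real.Gamma (1/(β:ℝ)))) * t⁻¹ from by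
        rw [show 2*t*Real.Gamma (1/(β:ℝ)) = 2*Real.Gamma (1/(β:ℝ))*t from by ring, ← div_div,
          div_eq_mul_inv],
      Real.log_mul (by positivity) (by positivity), Real.log_inv]
    rw [div_eq_mul_inv]
    ring
  rw [hev.deriv_eq]
  have h1 : HasDerivAt (fun s' : ℝ => (s' ^ β)⁻¹)
      (-((β:ℝ) * s ^ (β - 1)) / (s ^ β) ^ 2) s :=
    (hasDerivAt_pow β s).inv (by positivity)
  have h2 : HasDerivAt (fun s' : ℝ => Real.log s') s⁻¹ s := Real.hasDerivAt_log hs.ne'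
  have h3 := ((hasDerivAt_const s (Real.log ((β:ℝ)/(2*Real.Gamma (1/(β:ℝ)))))).sub h2).sub
    (h1.const_mul ((x - μ) ^ β))
  erw [h3.deriv]
  have hpow : ((s:ℝ) ^ β) ^ 2 = s ^ (β + 1) * s ^ (β - 1) := by
    rw [← pow_mul, ← pow_add]; congr 1; omega
  rw [hpow]
  have h4 : s ^ (β - 1) ≠ 0 := by positivity
  field_simp
  ring

lemma gg_deriv2 {β : ℕ} (hβ : 0 < β) (μ x : ℝ) {σ : ℝ} (hσ : 0 < σ) :
    deriv (fun s => deriv (fun s' => genGaussLogLik β μ s' x) s) σ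
      = (σ ^ 2)⁻¹ - (β : ℝ) * ((β : ℝ) + 1) * (x - μ) ^ β * (σ ^ (β + 2))⁻¹ := by
  have hev : (fun s => deriv (fun s' => genGaussLogLik β μ s' x) s) =ᶠ[nhds σ]
      (fun s => -s⁻¹ + (β : ℝ) * (x - μ) ^ β * (s ^ (β + 1))⁻¹) := by
    filter_upwards [Ioi_mem_nhds hσ] with t ht
    exact gg_deriv1 hβ μ x ht
  rw [hev.deriv_eq]
  have h1 : HasDerivAt (fun s : ℝ => s⁻¹) (-(σ ^ 2)⁻¹) σ := hasDerivAt_inv hσ.ne'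
  have h2 : HasDerivAt (fun s : ℝ => (s ^ (β + 1))⁻¹)
      (-(((β:ℝ) + 1) * σ ^ β) / (σ ^ (β + 1)) ^ 2) σ := by
    have := (hasDerivAt_pow (β + 1) σ).inv (by positivity)
    convert (show HasDerivAt (fun s : ℝ => (s ^ (β + 1))⁻¹) _ σ from this) using 1 <;> push_cast <;> simp
  have h3 := (h1.neg).add (h2.const_mul ((β : ℝ) * (x - μ) ^ β))
  erw [h3.deriv]
  have hpow : ((σ:ℝ) ^ (β + 1)) ^ 2 = σ ^ (β + 2) * σ ^ β := by
    rw [← pow_mul, ← pow_add]; congr 1; omega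
  rw [hpow]
  have h4 : (σ:ℝ) ^ β ≠ 0 := by positivity
  field_simp
  ring

end aux

theorem generalized_gaussian_fisher_g22
    (β : ℕ) (hβeven : Even β) (hβpos : 0 < β) (μ σ : ℝ) (hσ : 0 < σ) :
    -∫ x : ℝ, (deriv (fun s => deriv (fun s' => genGaussLogLik β μ s' x) s) σ)
        * genGaussPdf β μ σ x
      = (β : ℝ) / σ ^ 2 := by
  have hΓ : 0 < Real.Gamma (1/(β:ℝ)) := Real.Gamma_pos_of_pos (by positivity)
  have hβ' : (0:ℝ) < β := by exact_mod_cast hβpos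
  set K : ℝ := (β : ℝ) / (2 * σ * Real.Gamma (1 / (β : ℝ))) with hK
  set E : ℝ → ℝ := fun x => Real.exp (-(x - μ) ^ β / σ ^ β) with hE
  obtain ⟨hint0, hval0⟩ := gg_line hσ hβpos hβeven (q := 0) Even.zero μ
  obtain ⟨hintβ, hvalβ⟩ := gg_line hσ hβpos hβeven (q := β) hβeven μ
  simp only [pow_zero, one_mul] at hint0 hval0
  have hpdf : ∀ x : ℝ, genGaussPdf β μ σ x = K * E x := fun x => rfl
  set b : ℝ := (β : ℝ) * ((β : ℝ) + 1) * (σ ^ (β + 2))⁻¹ with hb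
  have hre : ∀ x : ℝ,
      (deriv (fun s => deriv (fun s' => genGaussLogLik β μ s' x) s) σ) * genGaussPdf β μ σ x
        = ((σ ^ 2)⁻¹ * K) * E x - (b * K) * ((x - μ) ^ β * E x) := by
    intro x
    rw [gg_deriv2 hβpos μ x hσ, hpdf]
    simp only [hb]; ring
  rw [show (∫ x : ℝ, (deriv (fun s => deriv (fun s' => genGaussLogLik β μ s' x) s) σ)
        * genGaussPdf β μ σ x)
      = ∫ x : ℝ, (((σ ^ 2)⁻¹ * K) * E x - (b * K) * ((x - μ) ^ β * E x)) from by
    congr 1; funext x; exact hre x]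
  rw [integral_sub (hint0.const_mul _) (hintβ.const_mul _),
    integral_const_mul, integral_const_mul, hval0, hvalβ]
  have hΓβ : Real.Gamma (((β:ℝ) + 1) / β) = (1 / β) * Real.Gamma (1 / (β:ℝ)) := by
    rw [show ((β:ℝ) + 1) / β = 1 / β + 1 from by (field_simp; ring),
      Real.Gamma_add_one (by positivity)]
  rw [hΓβ]
  have hp1 : (σ:ℝ) ^ (β + 1) = σ ^ β * σ := by ring
  have hp2 : (σ:ℝ) ^ (β + 2) = σ ^ β * σ ^ 2 := by ring
  simp only [hK, hb, hp1, hp2]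
  have h4 : (σ:ℝ) ^ β ≠ 0 := by positivity
  push_cast
  field_simp
  all_goals ring
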